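/- Let (G,κ) be a proper edge coloring of a tree that contains a symmetric edge. Then 𝔊_κ = Sym(V(G)), the full symmetric group on the vertices of G. -/

import Mathlib

open scoped Classical

/-- A proper edge coloring of a finite simple graph `G` with colors `{1, …, k}`:
it assigns colors in `{1, …, k}` to edges, is surjective onto `{1, …, k}`, and
incident edges receive distinct colors. -/
def IsProperEdgeColoring {V : Type*} (G : SimpleGraph V) (k : ℕ) (κ : Sym2 V → ℕ) : Prop :=
  (∀ e ∈ G.edgeSet, κ e ∈ Finset.Icc 1 k) ∧
  (∀ a ∈ Finset.Icc 1 k, ∃ e ∈ G.edgeSet, κ e = a) ∧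
  (∀ u v w : V, G.Adj u v → G.Adj u w → v ≠ w → κ s(u, v) ≠ κ s(u, w))
/-- `IsToggle G κ a τ` says that the permutation `τ` is the product of the
transpositions `(i j)` over all edges `{i,j}` of `G` colored `a`: it swaps the two
endpoints of every edge colored `a` and fixes all other vertices. -/
def IsToggle {V : Type*} (G : SimpleGraph V) (κ : Sym2 V → ℕ) (a : ℕ) (τ : Equiv.Perm V) : Prop :=
  ∀ v w : V, v ≠ w → (τ v = w ↔ G.Adj v w ∧ κ s(v, w) = a)
/-- The coloring group `𝔊_κ`: the subgroup of `Sym(V)` generated by the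
permutations `τ_1, …, τ_k` associated to the colors `1, …, k`. -/
def coloringGroup {V : Type*} (G : SimpleGraph V) (k : ℕ) (κ : Sym2 V → ℕ) :
    Subgroup (Equiv.Perm V) :=
  Subgroup.closure { τ : Equiv.Perm V | ∃ a : ℕ, 1 ≤ a ∧ a ≤ k ∧ IsToggle G κ a τ }

/-- An edge `e` of `(G,κ)` is a *symmetric edge* if all edges incident to `e` have
pairwise distinct colors, and there is a set `S` of colors containing the colors of all
edges incident to `e` but not the color of `e`, such that deleting all edges colored by
a color in `S` leaves a graph with exactly one connected component of even order. -/
def IsSymmetricEdge {V : Type*} [Fintype V] (G : SimpleGraph V) (k : ℕ)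
    (κ : Sym2 V → ℕ) (e : Sym2 V) : Prop :=
  e ∈ G.edgeSet ∧
  (∀ f g : Sym2 V, f ∈ G.edgeSet → g ∈ G.edgeSet → f ≠ e → g ≠ e → f ≠ g →
    (∃ v, v ∈ f ∧ v ∈ e) → (∃ v, v ∈ g ∧ v ∈ e) → κ f ≠ κ g) ∧
  ∃ S : Finset ℕ, S ⊆ Finset.Icc 1 k ∧
    (∀ f ∈ G.edgeSet, f ≠ e → (∃ v, v ∈ f ∧ v ∈ e) → κ f ∈ S) ∧
    κ e ∉ S ∧
    (∃! C : (G.deleteEdges {f : Sym2 V | κ f ∈ S}).ConnectedComponent, Even C.supp.ncard)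

namespace Stmt11Aux

variable {V : Type*}

/-- Local properness of an edge coloring. -/
def Proper (H : SimpleGraph V) (κ : Sym2 V → ℕ) : Prop :=
  ∀ u v w : V, H.Adj u v → H.Adj u w → v ≠ w → κ s(u, v) ≠ κ s(u, w)

theorem Proper.mono {H H' : SimpleGraph V} {κ : Sym2 V → ℕ} (hle : H' ≤ H)
    (hp : Proper H κ) : Proper H' κ :=
  fun u v w h1 h2 hne => hp u v w (hle h1) (hle h2) hne

theorem toggle_unique {H : SimpleGraph V} {κ : Sym2 V → ℕ} {a : ℕ} {τ τ' : Equiv.Perm V}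
    (h : IsToggle H κ a τ) (h' : IsToggle H κ a τ') : τ = τ' := by
  ext v
  by_cases hv : τ v = v
  · rw [hv]
    by_contra hne
    have h1 := (h' v (τ' v) hne).mp rfl
    have h2 := (h v (τ' v) hne).mpr h1
    rw [hv] at h2
    exact hne h2
  · have hne' : v ≠ τ v := fun e => hv e.symm
    have h1 := (h v (τ v) hne').mp rfl
    exact ((h' v (τ v) hne').mpr h1).symm

theorem exists_toggle {H : SimpleGraph V} {κ : Sym2 V → ℕ} (hp : Proper H κ) (a : ℕ) :
    ∃ τ : Equiv.Perm V, IsToggle H κ a τ := by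
  classical
  have huniq : ∀ v w w', H.Adj v w → κ s(v, w) = a → H.Adj v w' → κ s(v, w') = a → w = w' := by
    intro v w w' h1 h2 h3 h4
    by_contra hne
    exact hp v w w' h1 h3 hne (h2.trans h4.symm)
  let f : V → V := fun v => if h : ∃ w, H.Adj v w ∧ κ s(v, w) = a then h.choose else v
  have hfspec : ∀ v w, H.Adj v w → κ s(v, w) = a → f v = w := by
    intro v w h1 h2
    have hex : ∃ w, H.Adj v w ∧ κ s(v, w) = a := ⟨w, h1, h2⟩
    have hc := hex.choose_spec
    show (if h : ∃ w, H.Adj v w ∧ κ s(v, w) = a then h.choose else v) = w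
    rw [dif_pos hex]
    exact huniq v _ w hc.1 hc.2 h1 h2
  have hinv : Function.Involutive f := by
    intro v
    by_cases hex : ∃ w, H.Adj v w ∧ κ s(v, w) = a
    · have hc := hex.choose_spec
      have h1 : f v = hex.choose := dif_pos hex
      rw [h1]
      exact hfspec _ v hc.1.symm (by rw [Sym2.eq_swap]; exact hc.2)
    · have h1 : f v = v := dif_neg hex
      rw [h1, h1]
  refine ⟨hinv.toPerm f, ?_⟩
  intro v w hvw
  constructor
  · intro h
    have hfv : f v = w := h
    by_cases hex : ∃ w, H.Adj v w ∧ κ s(v, w) = a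
    · have hc := hex.choose_spec
      have h1 : f v = hex.choose := dif_pos hex
      rw [h1] at hfv
      rw [← hfv]
      exact hc
    · have h1 : f v = v := dif_neg hex
      rw [h1] at hfv
      exact absurd hfv hvw
  · intro hh
    exact hfspec v w hh.1 hh.2

noncomputable def tog (H : SimpleGraph V) (κ : Sym2 V → ℕ) (a : ℕ) : Equiv.Perm V :=
  if h : ∃ τ : Equiv.Perm V, IsToggle H κ a τ then h.choose else 1

theorem tog_spec {H : SimpleGraph V} {κ : Sym2 V → ℕ} (hp : Proper H κ) (a : ℕ) :
    IsToggle H κ a (tog H κ a) := by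
  have hex := exists_toggle hp a
  rw [tog, dif_pos hex]
  exact hex.choose_spec

theorem IsToggle.apply_apply {H : SimpleGraph V} {κ : Sym2 V → ℕ} {a : ℕ} {τ : Equiv.Perm V}
    (h : IsToggle H κ a τ) (v : V) : τ (τ v) = v := by
  by_cases hv : τ v = v
  · rw [hv, hv]
  · have h1 := (h v (τ v) (fun e => hv e.symm)).mp rfl
    exact (h (τ v) v hv).mpr ⟨h1.1.symm, by rw [Sym2.eq_swap]; exact h1.2⟩

theorem tog_inv (H : SimpleGraph V) (κ : Sym2 V → ℕ) (a : ℕ) :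
    (tog H κ a)⁻¹ = tog H κ a := by
  by_cases hex : ∃ τ : Equiv.Perm V, IsToggle H κ a τ
  · have hs : IsToggle H κ a (tog H κ a) := by
      rw [tog, dif_pos hex]; exact hex.choose_spec
    ext v
    calc (tog H κ a)⁻¹ v = (tog H κ a)⁻¹ ((tog H κ a) ((tog H κ a) v)) := by
          rw [IsToggle.apply_apply hs]
      _ = tog H κ a v := Equiv.symm_apply_apply _ _
  · rw [tog, dif_neg hex, inv_one]

theorem IsToggle.reach {H : SimpleGraph V} {κ : Sym2 V → ℕ} {a : ℕ} {τ : Equiv.Perm V}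
    (h : IsToggle H κ a τ) (v : V) : H.Reachable v (τ v) := by
  by_cases hv : τ v = v
  · rw [hv]
  · exact ((h v (τ v) (fun e => hv e.symm)).mp rfl).1.reachable

theorem reach_prod {H : SimpleGraph V} {κ : Sym2 V → ℕ} (hp : Proper H κ) (L : List ℕ) (v : V) :
    H.Reachable v (((L.map (tog H κ)).prod) v) := by
  induction L generalizing v with
  | nil => simpa using SimpleGraph.Reachable.refl v
  | cons b L ih =>
      simp only [List.map_cons, List.prod_cons, Equiv.Perm.mul_apply]
      exact (ih v).trans (IsToggle.reach (tog_spec hp b) _)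

theorem reach_prod_inv {H : SimpleGraph V} {κ : Sym2 V → ℕ} (hp : Proper H κ) (L : List ℕ)
    (v : V) : H.Reachable v ((((L.map (tog H κ)).prod)⁻¹) v) := by
  have h1 : ((L.map (tog H κ)).prod)⁻¹ = ((L.reverse.map (tog H κ)).prod) := by
    rw [List.prod_inv_reverse]
    congr 1
    rw [List.map_map, List.map_reverse]
    congr 1
    exact List.map_congr_left (fun b _ => tog_inv H κ b)
  rw [h1]
  exact reach_prod hp L.reverse v

theorem prod_fix {l : List (Equiv.Perm V)} {z : V} (h : ∀ p ∈ l, p z = z) : l.prod z = z := by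
  induction l with
  | nil => simp
  | cons p l ih =>
      simp only [List.prod_cons, Equiv.Perm.mul_apply]
      rw [ih (fun q hq => h q (List.mem_cons_of_mem _ hq)), h p List.mem_cons_self]

theorem pow_fix {g : Equiv.Perm V} {z : V} (h : g z = z) (n : ℕ) : (g ^ n) z = z := by
  induction n with
  | zero => simp
  | succ n ih => rw [pow_succ, Equiv.Perm.mul_apply, h, ih]





variable [Fintype V]

theorem zpow_succ_eq (h : Equiv.Perm V) (i : ℤ) : h ^ (i + 1) = h * h ^ i := by
  rw [add_comm, zpow_add, zpow_one]

theorem zpow_pred_eq (h : Equiv.Perm V) (i : ℤ) : h ^ (i - 1) = h⁻¹ * h ^ i := by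
  rw [sub_eq_add_neg, add_comm, zpow_add, zpow_neg_one]

theorem join_pointwise {g : Equiv.Perm V} {u v x : V}
    (hxu : ¬ g.SameCycle x u) (hxv : ¬ g.SameCycle x v) :
    ∀ i : ℤ, ((g * Equiv.swap u v) ^ i) x = (g ^ i) x := by
  have hfix : ∀ z : V, z ≠ u → z ≠ v → (g * Equiv.swap u v) z = g z := by
    intro z h1 h2
    rw [Equiv.Perm.mul_apply, Equiv.swap_apply_of_ne_of_ne h1 h2]
  have hinv : (g * Equiv.swap u v)⁻¹ = Equiv.swap u v * g⁻¹ := by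
    rw [mul_inv_rev, Equiv.swap_inv]
  intro i
  induction i using Int.induction_on with
  | zero => simp
  | succ i ih =>
      rw [zpow_succ_eq, zpow_succ_eq, Equiv.Perm.mul_apply, Equiv.Perm.mul_apply, ih]
      have h1 : (g ^ (i : ℤ)) x ≠ u := fun he => hxu ⟨i, he⟩
      have h2 : (g ^ (i : ℤ)) x ≠ v := fun he => hxv ⟨i, he⟩
      exact hfix _ h1 h2
  | pred i ih =>
      rw [zpow_pred_eq, zpow_pred_eq, Equiv.Perm.mul_apply, Equiv.Perm.mul_apply, ih, hinv,
        Equiv.Perm.mul_apply]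
      have hz : g⁻¹ ((g ^ (-i : ℤ)) x) = (g ^ (-i - 1 : ℤ)) x := by
        rw [zpow_pred_eq, Equiv.Perm.mul_apply]
      have h1 : g⁻¹ ((g ^ (-i : ℤ)) x) ≠ u := fun he => hxu ⟨-i - 1, by rw [← hz, he]⟩
      have h2 : g⁻¹ ((g ^ (-i : ℤ)) x) ≠ v := fun he => hxv ⟨-i - 1, by rw [← hz, he]⟩
      rw [Equiv.swap_apply_of_ne_of_ne h1 h2]

theorem join_swap_sameCycle {g : Equiv.Perm V} {u v : V} (huv : u ≠ v)
    (hn : ¬ g.SameCycle u v) : (g * Equiv.swap u v).SameCycle u v := by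
  set h := g * Equiv.swap u v with hh
  have hhu : h u = g v := by rw [hh, Equiv.Perm.mul_apply, Equiv.swap_apply_left]
  have hfix : ∀ z : V, z ≠ u → z ≠ v → h z = g z := by
    intro z h1 h2
    rw [hh, Equiv.Perm.mul_apply, Equiv.swap_apply_of_ne_of_ne h1 h2]
  set q := Function.minimalPeriod (⇑g) v with hq
  have hper : v ∈ Function.periodicPts (⇑g) := by
    refine Function.mk_mem_periodicPts (orderOf_pos g) ?_
    show (⇑g)^[orderOf g] v = v
    rw [Equiv.Perm.iterate_eq_pow, pow_orderOf_eq_one]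
    rfl
  have hqpos : 0 < q := Function.minimalPeriod_pos_of_mem_periodicPts hper
  have key : ∀ i : ℕ, i < q → (h ^ (i + 1)) u = (g ^ (i + 1)) v := by
    intro i
    induction i with
    | zero => intro _; simpa using hhu
    | succ i ih =>
        intro hi
        have hz := ih (Nat.lt_of_succ_lt hi)
        have hz1 : (g ^ (i + 1) : Equiv.Perm V) v ≠ v := by
          intro hzv
          have hp : Function.IsPeriodicPt (⇑g) (i + 1) v := by
            show (⇑g)^[i + 1] v = v
            rw [Equiv.Perm.iterate_eq_pow]
            exact hzv
          exact Function.not_isPeriodicPt_of_pos_of_lt_minimalPeriod (Nat.succ_ne_zero i) hi hp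
        have hz2 : (g ^ (i + 1) : Equiv.Perm V) v ≠ u := by
          intro hzu
          exact hn (Equiv.Perm.SameCycle.symm ⟨(i + 1 : ℕ), by
            rw [zpow_natCast]; exact hzu⟩)
        have e1 : (h ^ (i + 1 + 1)) u = h ((h ^ (i + 1)) u) := by
          rw [pow_succ' h, Equiv.Perm.mul_apply]
        have e2 : (g ^ (i + 1 + 1)) v = g ((g ^ (i + 1)) v) := by
          rw [pow_succ' g, Equiv.Perm.mul_apply]
        rw [e1, e2, hz, hfix _ hz2 hz1]
  have hfin : (h ^ q) u = v := by
    have h1 := key (q - 1) (Nat.sub_lt hqpos Nat.one_pos)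
    rw [Nat.sub_add_cancel (Nat.one_le_of_lt hqpos)] at h1
    rw [h1]
    have := Function.iterate_minimalPeriod (f := ⇑g) (x := v)
    rw [Equiv.Perm.iterate_eq_pow] at this
    exact this
  exact ⟨(q : ℤ), by rw [zpow_natCast]; exact hfin⟩

theorem join_orbit_left {g : Equiv.Perm V} {u v : V} (huv : u ≠ v)
    (hn : ¬ g.SameCycle u v) :
    ∀ x : V, g.SameCycle u x → (g * Equiv.swap u v).SameCycle u x := by
  set h := g * Equiv.swap u v with hh
  have hhv : h v = g u := by rw [hh, Equiv.Perm.mul_apply, Equiv.swap_apply_right]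
  have hfix : ∀ z : V, z ≠ u → z ≠ v → h z = g z := by
    intro z h1 h2
    rw [hh, Equiv.Perm.mul_apply, Equiv.swap_apply_of_ne_of_ne h1 h2]
  have hj := join_swap_sameCycle huv hn
  have key : ∀ i : ℕ, (g * Equiv.swap u v).SameCycle u ((g ^ i) u) := by
    intro i
    induction i with
    | zero => simpa using Equiv.Perm.SameCycle.refl _ _
    | succ i ih =>
        have e2 : (g ^ (i + 1)) u = g ((g ^ i) u) := by
          rw [pow_succ' g, Equiv.Perm.mul_apply]
        rw [e2]
        by_cases hzu : (g ^ i) u = u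
        · rw [hzu]
          exact hj.trans ⟨1, by rw [zpow_one]; exact hhv.symm ▸ rfl⟩
        · have hzv : (g ^ i) u ≠ v := by
            intro he
            exact hn ⟨(i : ℤ), by rw [zpow_natCast]; exact he⟩
          rw [← hfix _ hzu hzv]
          exact ih.trans ⟨1, by rw [zpow_one]⟩
  intro x hx
  obtain ⟨i, _, rfl⟩ := Equiv.Perm.SameCycle.exists_pow_eq' hx
  exact key i

theorem join_orbit_closure {g : Equiv.Perm V} {u v : V} :
    ∀ i : ℤ, g.SameCycle u (((g * Equiv.swap u v) ^ i) u) ∨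
      g.SameCycle v (((g * Equiv.swap u v) ^ i) u) := by
  classical
  set h := g * Equiv.swap u v with hh
  have hhu : h u = g v := by rw [hh, Equiv.Perm.mul_apply, Equiv.swap_apply_left]
  have hhv : h v = g u := by rw [hh, Equiv.Perm.mul_apply, Equiv.swap_apply_right]
  have hfix : ∀ z : V, z ≠ u → z ≠ v → h z = g z := by
    intro z h1 h2
    rw [hh, Equiv.Perm.mul_apply, Equiv.swap_apply_of_ne_of_ne h1 h2]
  have hinv : h⁻¹ = Equiv.swap u v * g⁻¹ := by rw [hh, mul_inv_rev, Equiv.swap_inv]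
  intro i
  induction i using Int.induction_on with
  | zero => left; simpa using Equiv.Perm.SameCycle.refl _ _
  | succ i ih =>
      rw [zpow_succ_eq, Equiv.Perm.mul_apply]
      set w := (h ^ (i : ℤ)) u with hw
      by_cases hwu : w = u
      · rw [hwu, hhu]; right; exact ⟨1, by rw [zpow_one]⟩
      · by_cases hwv : w = v
        · rw [hwv, hhv]; left; exact ⟨1, by rw [zpow_one]⟩
        · rw [hfix w hwu hwv]
          rcases ih with h1 | h1
          · left; exact h1.trans ⟨1, by rw [zpow_one]⟩
          · right; exact h1.trans ⟨1, by rw [zpow_one]⟩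
  | pred i ih =>
      rw [zpow_pred_eq, Equiv.Perm.mul_apply, hinv, Equiv.Perm.mul_apply]
      set w := (h ^ (-i : ℤ)) u with hw
      have hgw : ∀ s : V, g.SameCycle s w → g.SameCycle s (g⁻¹ w) :=
        fun s hs => hs.trans ⟨-1, by rw [zpow_neg_one]⟩
      by_cases h1 : g⁻¹ w = u
      · rw [h1, Equiv.swap_apply_left]; right; exact Equiv.Perm.SameCycle.refl _ _
      · by_cases h2 : g⁻¹ w = v
        · rw [h2, Equiv.swap_apply_right]; left; exact Equiv.Perm.SameCycle.refl _ _
        · rw [Equiv.swap_apply_of_ne_of_ne h1 h2]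
          rcases ih with h3 | h3
          · left; exact hgw _ h3
          · right; exact hgw _ h3

theorem sameCycle_mul_swap_iff {g : Equiv.Perm V} {u v : V} (huv : u ≠ v)
    (hn : ¬ g.SameCycle u v) (x y : V) :
    (g * Equiv.swap u v).SameCycle x y ↔
      (g.SameCycle x y ∨ (g.SameCycle x u ∧ g.SameCycle v y) ∨
        (g.SameCycle x v ∧ g.SameCycle u y)) := by
  classical
  have hswapcomm : g * Equiv.swap u v = g * Equiv.swap v u := by rw [Equiv.swap_comm]
  have hn' : ¬ g.SameCycle v u := fun hc => hn hc.symm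
  have hj : (g * Equiv.swap u v).SameCycle u v := join_swap_sameCycle huv hn
  have hleft : ∀ x : V, g.SameCycle u x → (g * Equiv.swap u v).SameCycle u x :=
    join_orbit_left huv hn
  have hright : ∀ x : V, g.SameCycle v x → (g * Equiv.swap u v).SameCycle v x := by
    intro x hx
    rw [hswapcomm]
    exact join_orbit_left huv.symm hn' x hx
  have hclosu : ∀ i : ℤ, g.SameCycle u (((g * Equiv.swap u v) ^ i) u) ∨
      g.SameCycle v (((g * Equiv.swap u v) ^ i) u) := join_orbit_closure
  have hclosv : ∀ i : ℤ, g.SameCycle v (((g * Equiv.swap u v) ^ i) v) ∨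
      g.SameCycle u (((g * Equiv.swap u v) ^ i) v) := by
    intro i
    rw [hswapcomm]
    exact join_orbit_closure i
  constructor
  · rintro ⟨i, rfl⟩
    by_cases h1 : g.SameCycle x u
    · -- x in orbit of u
      have hux : (g * Equiv.swap u v).SameCycle u x := hleft x h1.symm
      have huy : (g * Equiv.swap u v).SameCycle u (((g * Equiv.swap u v) ^ i) x) :=
        hux.trans ⟨i, rfl⟩
      obtain ⟨j, hj'⟩ := huy
      rcases hclosu j with h2 | h2
      · rw [hj'] at h2
        left; exact h1.trans h2
      · rw [hj'] at h2
        right; left; exact ⟨h1, h2⟩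
    · by_cases h2 : g.SameCycle x v
      · have hvx : (g * Equiv.swap u v).SameCycle v x := hright x h2.symm
        have hvy : (g * Equiv.swap u v).SameCycle v (((g * Equiv.swap u v) ^ i) x) :=
          hvx.trans ⟨i, rfl⟩
        obtain ⟨j, hj'⟩ := hvy
        rcases hclosv j with h3 | h3
        · rw [hj'] at h3
          left; exact h2.trans h3
        · rw [hj'] at h3
          right; right; exact ⟨h2, h3⟩
      · left
        exact ⟨i, by rw [← join_pointwise h1 h2 i]⟩
  · rintro (hxy | ⟨hxu, hvy⟩ | ⟨hxv, huy⟩)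
    · by_cases h1 : g.SameCycle x u
      · have hux := hleft x h1.symm
        have huy := hleft y (h1.symm.trans hxy)
        exact hux.symm.trans huy
      · by_cases h2 : g.SameCycle x v
        · have hvx := hright x h2.symm
          have hvy := hright y (h2.symm.trans hxy)
          exact hvx.symm.trans hvy
        · obtain ⟨i, hi⟩ := hxy
          exact ⟨i, by rw [join_pointwise h1 h2 i]; exact hi⟩
    · exact ((hleft x hxu.symm).symm.trans hj).trans (hright y hvy)
    · exact ((hright x hxv.symm).symm.trans hj.symm).trans (hleft y huy)



section Graphs

theorem acyclic_mono {H H' : SimpleGraph V} (hle : H' ≤ H) (hac : H.IsAcyclic) :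
    H'.IsAcyclic := by
  intro w c hc
  exact hac (c.mapLe hle) (hc.mapLe hle)

theorem reachable_deleteEdges_tri (H : SimpleGraph V) {u v : V} (hadj : H.Adj u v) (x y : V) :
    H.Reachable x y ↔
      ((H.deleteEdges {s(u, v)}).Reachable x y ∨
        ((H.deleteEdges {s(u, v)}).Reachable x u ∧ (H.deleteEdges {s(u, v)}).Reachable v y) ∨
        ((H.deleteEdges {s(u, v)}).Reachable x v ∧ (H.deleteEdges {s(u, v)}).Reachable u y)) := by
  set H' := H.deleteEdges {s(u, v)} with hH'
  have hle : H' ≤ H := SimpleGraph.deleteEdges_le _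
  constructor
  · intro hr
    obtain ⟨p⟩ := hr
    induction p with
    | nil => left; exact SimpleGraph.Reachable.refl _
    | @cons a b c hab p ih =>
        by_cases hE : s(a, b) = s(u, v)
        · rcases Sym2.eq_iff.mp hE with ⟨rfl, rfl⟩ | ⟨rfl, rfl⟩
          · rcases ih with h1 | ⟨h1, h2⟩ | ⟨h1, h2⟩
            · right; left; exact ⟨SimpleGraph.Reachable.refl _, h1⟩
            · right; left; exact ⟨SimpleGraph.Reachable.refl _, h2⟩
            · left; exact h2
          · rcases ih with h1 | ⟨h1, h2⟩ | ⟨h1, h2⟩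
            · right; right; exact ⟨SimpleGraph.Reachable.refl _, h1⟩
            · left; exact h2
            · right; right; exact ⟨SimpleGraph.Reachable.refl _, h2⟩
        · have hab' : H'.Adj a b := by
            rw [hH', SimpleGraph.deleteEdges_adj]
            exact ⟨hab, by simpa using hE⟩
          rcases ih with h1 | ⟨h1, h2⟩ | ⟨h1, h2⟩
          · left; exact hab'.reachable.trans h1
          · right; left; exact ⟨hab'.reachable.trans h1, h2⟩
          · right; right; exact ⟨hab'.reachable.trans h1, h2⟩
  · rintro (h1 | ⟨h1, h2⟩ | ⟨h1, h2⟩)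
    · exact h1.mono hle
    · exact ((h1.mono hle).trans hadj.reachable).trans (h2.mono hle)
    · exact ((h1.mono hle).trans hadj.symm.reachable).trans (h2.mono hle)

end Graphs

section Cyc

variable {κ : Sym2 V → ℕ}

theorem tog_congr {H H' : SimpleGraph V} (hp : Proper H κ) (hp' : Proper H' κ) {a : ℕ}
    (hcond : ∀ x y : V, x ≠ y → κ s(x, y) = a → (H.Adj x y ↔ H'.Adj x y)) :
    tog H κ a = tog H' κ a := by
  have h1 := tog_spec hp a
  have h2 : IsToggle H' κ a (tog H κ a) := by
    intro x y hxy
    rw [h1 x y hxy]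
    constructor
    · rintro ⟨ha, hb⟩; exact ⟨(hcond x y hxy hb).mp ha, hb⟩
    · rintro ⟨ha, hb⟩; exact ⟨(hcond x y hxy hb).mpr ha, hb⟩
  exact toggle_unique h2 (tog_spec hp' a)

theorem cyc (n : ℕ) : ∀ (H : SimpleGraph V), H.edgeSet.ncard = n → H.IsAcyclic →
    Proper H κ → ∀ L : List ℕ, (∀ b₁ ∈ L, ∀ b₂ ∈ L, b₁ = b₂ → True) → L.Nodup →
    (∀ f ∈ H.edgeSet, κ f ∈ L) →
    ∀ x y : V, ((L.map (tog H κ)).prod).SameCycle x y ↔ H.Reachable x y := by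
  induction n with
  | zero =>
      intro H hcard _ hp L _ _ _ x y
      have hE : H.edgeSet = ∅ := (Set.ncard_eq_zero (Set.toFinite _)).mp hcard
      have hbot : H = ⊥ := SimpleGraph.edgeSet_eq_empty.mp hE
      have hprod : (L.map (tog H κ)).prod = 1 := by
        apply List.prod_eq_one
        intro p hpmem
        obtain ⟨b, hb, rfl⟩ := List.mem_map.mp hpmem
        refine toggle_unique (tog_spec hp b) ?_
        intro p q hpq
        constructor
        · intro h1; exact absurd h1 hpq
        · rintro ⟨hA, _⟩
          rw [hbot] at hA
          simp at hA
      rw [hprod, hbot, SimpleGraph.reachable_bot]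
      exact Equiv.Perm.sameCycle_one
  | succ n ih =>
      intro H hcard hac hp L _ hnd hcov x y
      have hne : H.edgeSet.Nonempty := by
        apply Set.nonempty_of_ncard_ne_zero
        rw [hcard]; exact Nat.succ_ne_zero n
      have hadj : ∃ u v : V, H.Adj u v := by
        obtain ⟨ε, hε⟩ := hne
        induction ε using Sym2.ind with
        | _ u v => exact ⟨u, v, H.mem_edgeSet.mp hε⟩
      obtain ⟨u, v, huv⟩ := hadj
      have hunev : u ≠ v := huv.ne
      set H' := H.deleteEdges {s(u, v)} with hH'
      have hle : H' ≤ H := SimpleGraph.deleteEdges_le _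
      have hp' : Proper H' κ := Proper.mono hle hp
      have hac' : H'.IsAcyclic := acyclic_mono hle hac
      have hE' : H'.edgeSet = H.edgeSet \ {s(u, v)} := SimpleGraph.edgeSet_deleteEdges _
      have hcard' : H'.edgeSet.ncard = n := by
        rw [hE', Set.ncard_diff_singleton_of_mem (H.mem_edgeSet.mpr huv), hcard]
        omega
      have hcov' : ∀ f ∈ H'.edgeSet, κ f ∈ L := by
        intro f hf
        rw [hE'] at hf
        exact hcov f hf.1
      set a := κ s(u, v) with ha
      have haL : a ∈ L := hcov _ (H.mem_edgeSet.mpr huv)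
      obtain ⟨L₁, L₂, rfl⟩ := List.append_of_mem haL
      rw [List.nodup_append] at hnd
      obtain ⟨hnd1, hnd2, hdisj⟩ := hnd
      rw [List.nodup_cons] at hnd2
      have hne1 : ∀ b ∈ L₁, b ≠ a := by
        intro b hb hba
        exact hdisj b hb a List.mem_cons_self hba
      have hne2 : ∀ b ∈ L₂, b ≠ a := by
        intro b hb hba
        exact hnd2.1 (hba ▸ hb)
      -- toggles of colors ≠ a agree on H and H'
      have htogeq : ∀ b : ℕ, b ≠ a → tog H κ b = tog H' κ b := by
        intro b hb
        refine tog_congr hp hp' ?_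
        intro p q hpq hκb
        rw [hH', SimpleGraph.deleteEdges_adj]
        constructor
        · intro h1
          refine ⟨h1, ?_⟩
          simp only [Set.mem_singleton_iff]
          intro hEeq
          rw [hEeq] at hκb
          exact hb (hκb.symm.trans ha.symm)
        · intro h1; exact h1.1
      -- the toggle of color a splits off the swap (u v)
      have ht'u : tog H' κ a u = u := by
        by_contra hcon
        have hsp := (tog_spec hp' a u (tog H' κ a u) (fun e => hcon e.symm)).mp rfl
        rw [hH', SimpleGraph.deleteEdges_adj] at hsp
        have hwv : tog H' κ a u ≠ v := by
          intro he
          apply hsp.1.2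
          rw [he]
          exact Set.mem_singleton _
        exact hp u (tog H' κ a u) v hsp.1.1 huv hwv (hsp.2.trans ha)
      have ht'v : tog H' κ a v = v := by
        by_contra hcon
        have hsp := (tog_spec hp' a v (tog H' κ a v) (fun e => hcon e.symm)).mp rfl
        rw [hH', SimpleGraph.deleteEdges_adj] at hsp
        have hwu : tog H' κ a v ≠ u := by
          intro he
          apply hsp.1.2
          rw [he, Sym2.eq_swap]
          exact Set.mem_singleton _
        have hvu : κ s(v, u) = a := by rw [Sym2.eq_swap]
        exact hp v (tog H' κ a v) u hsp.1.1 huv.symm hwu (hsp.2.trans hvu.symm)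
      have hsplit : tog H κ a = tog H' κ a * Equiv.swap u v := by
        refine toggle_unique (tog_spec hp a) ?_
        intro p q hpq
        rw [Equiv.Perm.mul_apply]
        by_cases hpu : p = u
        · subst hpu
          rw [Equiv.swap_apply_left, ht'v]
          constructor
          · rintro rfl
            exact ⟨huv, ha.symm⟩
          · rintro ⟨hA, hκ⟩
            by_contra hvq
            exact hp p q v hA huv (fun e => hvq e.symm) (hκ.trans ha)
        · by_cases hpv : p = v
          · subst hpv
            rw [Equiv.swap_apply_right, ht'u]
            constructor
            · rintro rfl
              exact ⟨huv.symm, by rw [Sym2.eq_swap]⟩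
            · rintro ⟨hA, hκ⟩
              by_contra huq
              have : κ s(p, u) = a := by rw [Sym2.eq_swap]
              exact hp p q u hA huv.symm (fun e => huq e.symm) (hκ.trans this.symm)
          · rw [Equiv.swap_apply_of_ne_of_ne hpu hpv]
            rw [tog_spec hp' a p q hpq, hH', SimpleGraph.deleteEdges_adj]
            constructor
            · rintro ⟨⟨hA, _⟩, hκ⟩; exact ⟨hA, hκ⟩
            · rintro ⟨hA, hκ⟩
              refine ⟨⟨hA, ?_⟩, hκ⟩
              simp only [Set.mem_singleton_iff]
              intro hEeq
              rcases Sym2.eq_iff.mp hEeq with ⟨h1, h2⟩ | ⟨h1, h2⟩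
              · exact hpu h1
              · exact hpv h1
      -- assemble the product
      set t' := tog H' κ a with ht'
      set A := (L₁.map (tog H' κ)).prod with hA
      set B := (L₂.map (tog H' κ)).prod with hB
      have hmap1 : L₁.map (tog H κ) = L₁.map (tog H' κ) :=
        List.map_congr_left (fun b hb => htogeq b (hne1 b hb))
      have hmap2 : L₂.map (tog H κ) = L₂.map (tog H' κ) :=
        List.map_congr_left (fun b hb => htogeq b (hne2 b hb))
      have hg : ((L₁ ++ a :: L₂).map (tog H κ)).prod
          = (A * t' * B) * (B⁻¹ * Equiv.swap u v * B) := by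
        rw [List.map_append, List.map_cons, List.prod_append, List.prod_cons,
          hmap1, hmap2, hsplit]
        group
        rfl
      have hg' : ((L₁ ++ a :: L₂).map (tog H' κ)).prod = A * t' * B := by
        rw [List.map_append, List.map_cons, List.prod_append, List.prod_cons]
        group
        rfl
      have hswapconj : B⁻¹ * Equiv.swap u v * B = Equiv.swap (B⁻¹ u) (B⁻¹ v) := by
        have h0 := Equiv.swap_apply_apply B⁻¹ u v
        rw [inv_inv] at h0
        exact h0.symm
      have IH2 : ∀ p q : V, (A * t' * B).SameCycle p q ↔ H'.Reachable p q := by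
        intro p q
        rw [← hg']
        exact ih H' hcard' hac' hp' (L₁ ++ a :: L₂) (fun _ _ _ _ _ => trivial)
          (by rw [List.nodup_append]; exact ⟨hnd1, by rw [List.nodup_cons]; exact hnd2, hdisj⟩)
          hcov' p q
      have hru : H'.Reachable u (B⁻¹ u) := reach_prod_inv hp' L₂ u
      have hrv : H'.Reachable v (B⁻¹ v) := reach_prod_inv hp' L₂ v
      have hnr : ¬ H'.Reachable u v := by
        have hbr : H.IsBridge s(u, v) :=
          (SimpleGraph.isAcyclic_iff_forall_adj_isBridge.mp hac) huv
        rw [SimpleGraph.isBridge_iff] at hbr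
        exact hbr
      have hnsc : ¬ (A * t' * B).SameCycle (B⁻¹ u) (B⁻¹ v) := by
        intro hsc
        exact hnr (hru.trans (((IH2 _ _).mp hsc).trans hrv.symm))
      have hne' : B⁻¹ u ≠ B⁻¹ v := fun h => hunev ((Equiv.injective _) h)
      rw [hg, hswapconj, sameCycle_mul_swap_iff hne' hnsc,
        reachable_deleteEdges_tri H huv x y]
      constructor
      · rintro (h1 | ⟨h1, h2⟩ | ⟨h1, h2⟩)
        · left; exact (IH2 x y).mp h1
        · right; left
          exact ⟨((IH2 _ _).mp h1).trans hru.symm, hrv.trans ((IH2 _ _).mp h2)⟩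
        · right; right
          exact ⟨((IH2 _ _).mp h1).trans hrv.symm, hru.trans ((IH2 _ _).mp h2)⟩
      · rintro (h1 | ⟨h1, h2⟩ | ⟨h1, h2⟩)
        · left; exact (IH2 x y).mpr h1
        · right; left
          exact ⟨(IH2 _ _).mpr (h1.trans hru), (IH2 _ _).mpr (hrv.symm.trans h2)⟩
        · right; right
          exact ⟨(IH2 _ _).mpr (h1.trans hrv), (IH2 _ _).mpr (hru.symm.trans h2)⟩

end Cyc

section Main

variable {k : ℕ} {κ : Sym2 V → ℕ}

theorem key_swap_mem {G : SimpleGraph V} (hG : G.IsTree)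
    (hκ : IsProperEdgeColoring G k κ) {x y : V} (hxy : G.Adj x y)
    (he : IsSymmetricEdge G k κ s(x, y)) :
    Equiv.swap x y ∈ coloringGroup G k κ := by
  classical
  obtain ⟨hedge, hpair, S, hSsub, hSinc, hcS, huniq⟩ := he
  have hpG : Proper G κ := hκ.2.2
  have hne : x ≠ y := hxy.ne
  have hc : κ s(x, y) ∈ Finset.Icc 1 k := hκ.1 _ hedge
  set c := κ s(x, y) with hcdef
  set H := G.deleteEdges {f | κ f ∈ S} with hH
  obtain ⟨C₀, hC₀even, hC₀uniq⟩ := huniq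
  have hle : H ≤ G := SimpleGraph.deleteEdges_le _
  have hpH : Proper H κ := Proper.mono hle hpG
  have hacH : H.IsAcyclic := acyclic_mono hle hG.IsAcyclic
  have hHadjxy : H.Adj x y := by
    rw [hH, SimpleGraph.deleteEdges_adj]
    exact ⟨hxy, hcS⟩
  -- the H-component of x is exactly {x, y}
  have hclosed : ∀ p q : V, H.Adj p q → p ∈ ({x, y} : Set V) → q ∈ ({x, y} : Set V) := by
    intro p q hpq hp
    rw [hH, SimpleGraph.deleteEdges_adj] at hpq
    have hp' : p = x ∨ p = y := by simpa using hp
    rcases hp' with rfl | rfl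
    · by_cases hqy : q = y
      · simp [hqy]
      · exfalso
        have hf : s(p, q) ≠ s(p, y) := fun hf => hqy (Sym2.congr_right.mp hf)
        have := hSinc s(p, q) (G.mem_edgeSet.mpr hpq.1) hf
          ⟨p, Sym2.mem_iff.mpr (Or.inl rfl), Sym2.mem_iff.mpr (Or.inl rfl)⟩
        exact hpq.2 this
    · by_cases hqx : q = x
      · simp [hqx]
      · exfalso
        have hf : s(p, q) ≠ s(x, p) := by
          intro hf
          rcases Sym2.eq_iff.mp hf with ⟨h1, h2⟩ | ⟨h1, h2⟩
          · exact hne h1.symm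
          · exact hqx h2
        have := hSinc s(p, q) (G.mem_edgeSet.mpr hpq.1) hf
          ⟨p, Sym2.mem_iff.mpr (Or.inl rfl), Sym2.mem_iff.mpr (Or.inr rfl)⟩
        exact hpq.2 this
  have hreachx : ∀ z, H.Reachable x z → z ∈ ({x, y} : Set V) := by
    have main : ∀ (p q : V) (w : H.Walk p q), p ∈ ({x, y} : Set V) → q ∈ ({x, y} : Set V) := by
      intro p q w
      induction w with
      | nil => exact id
      | cons h w ih => intro hp; exact ih (hclosed _ _ h hp)
    intro z hz
    obtain ⟨p⟩ := hz
    exact main x z p (by simp)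
  have hsuppx : (H.connectedComponentMk x).supp = {x, y} := by
    ext z
    rw [SimpleGraph.ConnectedComponent.mem_supp_iff, SimpleGraph.ConnectedComponent.eq]
    constructor
    · intro h
      exact hreachx z h.symm
    · intro hz
      have hz' : z = x ∨ z = y := by simpa using hz
      rcases hz' with rfl | rfl
      · exact SimpleGraph.Reachable.refl _
      · exact hHadjxy.symm.reachable
  have hevenx : Even ((H.connectedComponentMk x).supp.ncard) := by
    rw [hsuppx, Set.ncard_pair hne]
    exact ⟨1, rfl⟩
  have hCx : H.connectedComponentMk x = C₀ := hC₀uniq _ hevenx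
  have hodd : ∀ z : V, z ≠ x → z ≠ y → ¬ Even ((H.connectedComponentMk z).supp.ncard) := by
    intro z hzx hzy hev
    have h2 : H.connectedComponentMk z = H.connectedComponentMk x :=
      (hC₀uniq _ hev).trans hCx.symm
    have h3 : H.Reachable z x := SimpleGraph.ConnectedComponent.eq.mp h2
    have := hreachx z h3.symm
    rcases (by simpa using this : z = x ∨ z = y) with rfl | rfl
    · exact hzx rfl
    · exact hzy rfl
  -- the colors used for the cycle element
  set T : Finset ℕ := insert c ((Finset.Icc 1 k) \ S) with hT
  have hTmem : ∀ b ∈ T, b ∈ Finset.Icc 1 k ∧ b ∉ S := by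
    intro b hb
    rcases Finset.mem_insert.mp hb with rfl | hb'
    · exact ⟨hc, hcS⟩
    · exact ⟨(Finset.mem_sdiff.mp hb').1, (Finset.mem_sdiff.mp hb').2⟩
  set L := T.toList with hL
  have hLnd : L.Nodup := T.nodup_toList
  have hmemL : ∀ b : ℕ, b ∈ L ↔ b ∈ T := fun b => Finset.mem_toList
  have htg : ∀ b ∈ T, tog H κ b = tog G κ b := by
    intro b hb
    refine tog_congr hpH hpG ?_
    intro p q hpq hκb
    rw [hH, SimpleGraph.deleteEdges_adj]
    constructor
    · exact And.left
    · intro hA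
      refine ⟨hA, ?_⟩
      simp only [Set.mem_setOf_eq]
      rw [hκb]
      exact (hTmem b hb).2
  set g := (L.map (tog H κ)).prod with hg
  have hgmem : g ∈ coloringGroup G k κ := by
    apply Subgroup.list_prod_mem
    intro p hp
    obtain ⟨b, hbL, rfl⟩ := List.mem_map.mp hp
    have hbT := (hmemL b).mp hbL
    rw [htg b hbT]
    apply Subgroup.subset_closure
    have hicc := (hTmem b hbT).1
    rw [Finset.mem_Icc] at hicc
    exact ⟨b, hicc.1, hicc.2, tog_spec hpG b⟩
  have hcyc : ∀ p q : V, g.SameCycle p q ↔ H.Reachable p q := by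
    intro p q
    refine cyc (H.edgeSet.ncard) H rfl hacH hpH L (fun _ _ _ _ _ => trivial) hLnd ?_ p q
    intro f hf
    have hf2 := hf
    rw [hH, SimpleGraph.edgeSet_deleteEdges] at hf2
    have h1 : κ f ∈ Finset.Icc 1 k := hκ.1 f hf2.1
    have h2 : κ f ∉ S := hf2.2
    rw [hmemL]
    exact Finset.mem_insert_of_mem (Finset.mem_sdiff.mpr ⟨h1, h2⟩)
  -- action of the toggles on x and y
  have htogc_x : tog H κ c x = y := (tog_spec hpH c x y hne).mpr ⟨hHadjxy, rfl⟩
  have htogc_y : tog H κ c y = x :=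
    (tog_spec hpH c y x (Ne.symm hne)).mpr ⟨hHadjxy.symm, by rw [Sym2.eq_swap]⟩
  have hfixb : ∀ b ∈ T, b ≠ c → tog H κ b x = x ∧ tog H κ b y = y := by
    intro b hbT hbc
    constructor
    · by_contra hcon
      have hsp := (tog_spec hpH b x _ (fun e => hcon e.symm)).mp rfl
      have hGadj : G.Adj x (tog H κ b x) := hle hsp.1
      by_cases hzy : tog H κ b x = y
      · rw [hzy] at hsp
        exact hbc hsp.2.symm
      · have hfne : s(x, tog H κ b x) ≠ s(x, y) := fun hf => hzy (Sym2.congr_right.mp hf)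
        have hSmem := hSinc _ (G.mem_edgeSet.mpr hGadj) hfne
          ⟨x, Sym2.mem_iff.mpr (Or.inl rfl), Sym2.mem_iff.mpr (Or.inl rfl)⟩
        rw [hsp.2] at hSmem
        exact (hTmem b hbT).2 hSmem
    · by_contra hcon
      have hsp := (tog_spec hpH b y _ (fun e => hcon e.symm)).mp rfl
      have hGadj : G.Adj y (tog H κ b y) := hle hsp.1
      by_cases hzx : tog H κ b y = x
      · rw [hzx] at hsp
        have : κ s(x, y) = b := by rw [Sym2.eq_swap]; exact hsp.2
        exact hbc this.symm
      · have hfne : s(y, tog H κ b y) ≠ s(x, y) := by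
          intro hf
          rcases Sym2.eq_iff.mp hf with ⟨h1, h2⟩ | ⟨h1, h2⟩
          · exact hne h1.symm
          · exact hzx h2
        have hSmem := hSinc _ (G.mem_edgeSet.mpr hGadj) hfne
          ⟨y, Sym2.mem_iff.mpr (Or.inl rfl), Sym2.mem_iff.mpr (Or.inr rfl)⟩
        rw [hsp.2] at hSmem
        exact (hTmem b hbT).2 hSmem
  -- g swaps x and y
  have hcT : c ∈ T := Finset.mem_insert_self _ _
  have hcL : c ∈ L := (hmemL c).mpr hcT
  obtain ⟨M₁, M₂, hLsplit⟩ := List.append_of_mem hcL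
  have hndL := hLnd
  rw [hLsplit, List.nodup_append, List.nodup_cons] at hndL
  have hM1 : ∀ b ∈ M₁, b ≠ c := by
    intro b hb hbc
    exact hndL.2.2 b hb c List.mem_cons_self hbc
  have hM2 : ∀ b ∈ M₂, b ≠ c := by
    intro b hb hbc
    exact hndL.2.1.1 (hbc ▸ hb)
  have hMT : ∀ b : ℕ, b ∈ M₁ ∨ b ∈ M₂ → b ∈ T := by
    intro b hb
    apply (hmemL b).mp
    rw [hLsplit]
    rcases hb with hb | hb
    · exact List.mem_append_left _ hb
    · exact List.mem_append_right _ (List.mem_cons_of_mem _ hb)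
  have hgswap : g x = y ∧ g y = x := by
    rw [hg, hLsplit, List.map_append, List.map_cons, List.prod_append, List.prod_cons]
    have hfix2 : ∀ z : V, (z = x ∨ z = y) →
        ((M₂.map (tog H κ)).prod z = z ∧ (M₁.map (tog H κ)).prod z = z) := by
      intro z hz
      constructor
      · apply prod_fix
        intro p hp
        obtain ⟨b, hb, rfl⟩ := List.mem_map.mp hp
        have := hfixb b (hMT b (Or.inr hb)) (hM2 b hb)
        rcases hz with rfl | rfl
        · exact this.1
        · exact this.2
      · apply prod_fix
        intro p hp
        obtain ⟨b, hb, rfl⟩ := List.mem_map.mp hp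
        have := hfixb b (hMT b (Or.inl hb)) (hM1 b hb)
        rcases hz with rfl | rfl
        · exact this.1
        · exact this.2
    constructor
    · rw [Equiv.Perm.mul_apply, Equiv.Perm.mul_apply, (hfix2 x (Or.inl rfl)).1, htogc_x,
        (hfix2 y (Or.inr rfl)).2]
    · rw [Equiv.Perm.mul_apply, Equiv.Perm.mul_apply, (hfix2 y (Or.inr rfl)).1, htogc_y,
        (hfix2 x (Or.inl rfl)).2]
  have hg2 : ∀ m : ℕ, (g ^ (2 * m)) x = x ∧ (g ^ (2 * m)) y = y := by
    intro m
    induction m with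
    | zero => simp
    | succ m ih =>
        have h2 : 2 * (m + 1) = 2 * m + 1 + 1 := by ring
        constructor
        · rw [h2, pow_succ, pow_succ, Equiv.Perm.mul_apply, Equiv.Perm.mul_apply,
            hgswap.1, hgswap.2, ih.1]
        · rw [h2, pow_succ, pow_succ, Equiv.Perm.mul_apply, Equiv.Perm.mul_apply,
            hgswap.2, hgswap.1, ih.2]
  have hgNodd : ∀ N : ℕ, Odd N → (g ^ N) x = y ∧ (g ^ N) y = x := by
    rintro N ⟨m, hm⟩
    have hm' : N = 2 * m + 1 := by omega
    constructor
    · rw [hm', pow_succ, Equiv.Perm.mul_apply, hgswap.1, (hg2 m).2]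
    · rw [hm', pow_succ, Equiv.Perm.mul_apply, hgswap.2, (hg2 m).1]
  set W : Finset V := Finset.univ \ {x, y} with hW
  set N : ℕ := ∏ z ∈ W, (if g z = z then 1 else (g.cycleOf z).support.card) with hN
  have hWmem : ∀ z : V, z ∈ W ↔ (z ≠ x ∧ z ≠ y) := by
    intro z
    rw [hW, Finset.mem_sdiff]
    simp
  have hfactor_odd : ∀ z ∈ W, Odd (if g z = z then 1 else (g.cycleOf z).support.card) := by
    intro z hzW
    obtain ⟨hzx, hzy⟩ := (hWmem z).mp hzW
    by_cases hgz : g z = z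
    · rw [if_pos hgz]; exact odd_one
    · rw [if_neg hgz]
      have hsupp : ((g.cycleOf z).support : Set V) = (H.connectedComponentMk z).supp := by
        ext w
        rw [Finset.mem_coe, Equiv.Perm.mem_support_cycleOf_iff,
          SimpleGraph.ConnectedComponent.mem_supp_iff, SimpleGraph.ConnectedComponent.eq]
        constructor
        · rintro ⟨hsc, -⟩
          exact ((hcyc z w).mp hsc).symm
        · intro hr
          exact ⟨(hcyc z w).mpr hr.symm, Equiv.Perm.mem_support.mpr hgz⟩
      have hcard : ((g.cycleOf z).support).card = ((H.connectedComponentMk z).supp).ncard := by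
        rw [← hsupp, Set.ncard_coe_finset]
      rw [hcard]
      exact Nat.not_even_iff_odd.mp (hodd z hzx hzy)
  have hNodd : Odd N := by
    rw [hN]
    exact Finset.prod_induction _ Odd (fun p q hp hq => hp.mul hq) odd_one hfactor_odd
  have hNfix : ∀ z : V, z ≠ x → z ≠ y → (g ^ N) z = z := by
    intro z hzx hzy
    by_cases hgz : g z = z
    · exact pow_fix hgz N
    · have hzW : z ∈ W := (hWmem z).mpr ⟨hzx, hzy⟩
      have hdvd : (if g z = z then 1 else (g.cycleOf z).support.card) ∣ N := by
        rw [hN]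
        exact Finset.dvd_prod_of_mem _ hzW
      rw [if_neg hgz] at hdvd
      obtain ⟨t, ht⟩ := hdvd
      have hm : (g ^ ((g.cycleOf z).support.card)) z = z := by
        rw [← Equiv.Perm.cycleOf_pow_apply_self g z]
        have h2 : orderOf (g.cycleOf z) = (g.cycleOf z).support.card :=
          (Equiv.Perm.isCycle_cycleOf g hgz).orderOf
        rw [← h2, pow_orderOf_eq_one]
        rfl
      rw [ht, pow_mul]
      exact pow_fix hm t
  have hgN : g ^ N = Equiv.swap x y := by
    ext z
    by_cases hzx : z = x
    · subst hzx
      rw [(hgNodd N hNodd).1, Equiv.swap_apply_left]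
    · by_cases hzy : z = y
      · subst hzy
        rw [(hgNodd N hNodd).2, Equiv.swap_apply_right]
      · rw [hNfix z hzx hzy, Equiv.swap_apply_of_ne_of_ne hzx hzy]
  exact hgN ▸ pow_mem hgmem N

end Main

end Stmt11Aux

/-- If a proper edge coloring of a tree contains a symmetric edge,
then the coloring group is the full symmetric group on the vertices. -/
theorem stmt_11 {V : Type*} [Fintype V] (G : SimpleGraph V) (hG : G.IsTree)
    (k : ℕ) (κ : Sym2 V → ℕ) (hκ : IsProperEdgeColoring G k κ)
    (e : Sym2 V) (he : IsSymmetricEdge G k κ e) :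
    coloringGroup G k κ = ⊤ := by
  classical
  open Stmt11Aux in
  revert he
  induction e using Sym2.ind with
  | _ x y =>
    intro he
    have hxy : G.Adj x y := G.mem_edgeSet.mp he.1
    have hswap : Equiv.swap x y ∈ coloringGroup G k κ :=
      Stmt11Aux.key_swap_mem hG hκ hxy he
    set GG := coloringGroup G k κ with hGG
    have hpG : Stmt11Aux.Proper G κ := hκ.2.2
    have hpair := he.2.1
    have Rconj : ∀ u v : V, Equiv.swap u v ∈ GG → ∀ σ : Equiv.Perm V, σ ∈ GG →
        Equiv.swap (σ u) (σ v) ∈ GG := by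
      intro u v h σ hσ
      rw [Equiv.swap_apply_apply]
      exact Subgroup.mul_mem _ (Subgroup.mul_mem _ hσ h) (Subgroup.inv_mem _ hσ)
    set R : V → V → Prop := fun u v => u = v ∨ Equiv.swap u v ∈ GG with hR
    have Rrefl : ∀ u, R u u := fun u => Or.inl rfl
    have Rsymm : ∀ u v, R u v → R v u := by
      intro u v h
      rcases h with rfl | h
      · exact Rrefl u
      · right; rwa [Equiv.swap_comm]
    have Rtrans : ∀ u v w, R u v → R v w → R u w := by
      intro u v w h1 h2
      rcases h1 with rfl | h1
      · exact h2
      · rcases h2 with rfl | h2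
        · exact Or.inr h1
        · by_cases huw : u = w
          · exact Or.inl huw
          · by_cases huv : u = v
            · subst huv; exact Or.inr h2
            · by_cases hvw : v = w
              · subst hvw; exact Or.inr h1
              · right
                have hkey := Rconj u v h1 (Equiv.swap v w) h2
                rw [Equiv.swap_apply_of_ne_of_ne huv huw, Equiv.swap_apply_left] at hkey
                exact hkey
    have RconjR : ∀ (u v : V) (σ : Equiv.Perm V), σ ∈ GG → R u v → R (σ u) (σ v) := by
      intro u v σ hσ h
      rcases h with rfl | h
      · exact Rrefl _
      · exact Or.inr (Rconj u v h σ hσ)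
    have hRxy : R x y := Or.inr hswap
    have hmemtog : ∀ b ∈ Finset.Icc 1 k, Stmt11Aux.tog G κ b ∈ GG := by
      intro b hb
      rw [Finset.mem_Icc] at hb
      exact Subgroup.subset_closure ⟨b, hb.1, hb.2, Stmt11Aux.tog_spec hpG b⟩
    have step4 : ∀ b ∈ Finset.Icc 1 k, R x (Stmt11Aux.tog G κ b x) := by
      intro b hb
      by_cases hfix : Stmt11Aux.tog G κ b x = x
      · rw [hfix]; exact Rrefl x
      · have hsp := (Stmt11Aux.tog_spec hpG b x _ (fun e => hfix e.symm)).mp rfl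
        by_cases hzy : Stmt11Aux.tog G κ b x = y
        · rw [hzy]; exact hRxy
        · have hfy : Stmt11Aux.tog G κ b y = y := by
            by_contra hcon
            have hsp2 := (Stmt11Aux.tog_spec hpG b y _ (fun e => hcon e.symm)).mp rfl
            by_cases hwx : Stmt11Aux.tog G κ b y = x
            · rw [hwx] at hsp2
              have h1 : κ s(x, y) = b := by rw [Sym2.eq_swap]; exact hsp2.2
              exact hpG x y (Stmt11Aux.tog G κ b x) hxy hsp.1 (fun e => hzy e.symm)
                (h1.trans hsp.2.symm)
            · have hf1 : s(x, Stmt11Aux.tog G κ b x) ≠ s(x, y) :=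
                fun hf => hzy (Sym2.congr_right.mp hf)
              have hf2 : s(y, Stmt11Aux.tog G κ b y) ≠ s(x, y) := by
                intro hf
                rcases Sym2.eq_iff.mp hf with ⟨h1, h2⟩ | ⟨h1, h2⟩
                · exact hxy.ne h1.symm
                · exact hwx h2
              have hf3 : s(x, Stmt11Aux.tog G κ b x) ≠ s(y, Stmt11Aux.tog G κ b y) := by
                intro hf
                rcases Sym2.eq_iff.mp hf with ⟨h1, h2⟩ | ⟨h1, h2⟩
                · exact hxy.ne h1
                · exact hzy h2
              exact hpair s(x, Stmt11Aux.tog G κ b x) s(y, Stmt11Aux.tog G κ b y)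
                (G.mem_edgeSet.mpr hsp.1) (G.mem_edgeSet.mpr hsp2.1) hf1 hf2 hf3
                ⟨x, Sym2.mem_iff.mpr (Or.inl rfl), Sym2.mem_iff.mpr (Or.inl rfl)⟩
                ⟨y, Sym2.mem_iff.mpr (Or.inl rfl), Sym2.mem_iff.mpr (Or.inr rfl)⟩
                (hsp.2.trans hsp2.2.symm)
          have h1 : R (Stmt11Aux.tog G κ b x) (Stmt11Aux.tog G κ b y) :=
            RconjR x y _ (hmemtog b hb) hRxy
          rw [hfy] at h1
          exact Rtrans _ _ _ hRxy (Rsymm _ _ h1)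
    have step5 : ∀ b ∈ Finset.Icc 1 k, ∀ u : V, R x u → R x (Stmt11Aux.tog G κ b u) := by
      intro b hb u h
      exact Rtrans _ _ _ (step4 b hb) (RconjR x u _ (hmemtog b hb) h)
    have step6 : ∀ u : V, R x u := by
      intro u
      obtain ⟨p⟩ := hG.isConnected.preconnected x u
      have main : ∀ (p q : V) (w : G.Walk p q), R x p → R x q := by
        intro p q w
        induction w with
        | nil => exact id
        | @cons p' q' r' hadj w ih =>
            intro hp
            refine ih ?_
            have hb : κ s(p', q') ∈ Finset.Icc 1 k := hκ.1 _ (G.mem_edgeSet.mpr hadj)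
            have htq : Stmt11Aux.tog G κ (κ s(p', q')) p' = q' :=
              (Stmt11Aux.tog_spec hpG _ p' q' hadj.ne).mpr ⟨hadj, rfl⟩
            rw [← htq]
            exact step5 _ hb p' hp
      exact main x u p (Rrefl x)
    rw [eq_top_iff, ← Equiv.Perm.closure_isSwap]
    refine (Subgroup.closure_le _).mpr ?_
    rintro σ ⟨u, v, huv, rfl⟩
    have hR : R u v := Rtrans _ _ _ (Rsymm _ _ (step6 u)) (step6 v)
    rcases hR with rfl | h
    · exact absurd rfl huv
    · exact h
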